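/- Let f : {-1,+1}^n → ℝ be given by a multilinear polynomial of degree at most k, f(x) = ∑_{|S| ≤ k} a_S ∏_{i∈S} x_i, with real coefficients. Then its fully decoupled version satisfies sup |f̃(x^{(1)}, …, x^{(k)})| ≤ (2e)^k · sup_{x ∈ {-1,+1}^n} |f(x)|, where the supremum on the left is over all x^{(1)}, …, x^{(k)} ∈ {-1,+1}^n. -/

import Mathlib

open Finset

/-- The ±1 value corresponding to a Boolean. -/
noncomputable def pm (b : Bool) : ℝ := if b then 1 else -1

/-- Evaluation of the multilinear polynomial with coefficients `a` at `x`. -/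
noncomputable def evalPoly {n : ℕ} (a : Finset (Fin n) → ℝ) (x : Fin n → ℝ) : ℝ :=
  ∑ S : Finset (Fin n), a S * ∏ i ∈ S, x i

/-- Fully decoupled version
`f̃(x⁽¹⁾,…,x⁽ᵏ⁾) = ∑_S ((k−|S|)!/k!) a_S ∑_{injective b : S → [k]} ∏_{i∈S} x_i^{(b(i))}`
(the `S = ∅` term equals `a_∅`). -/
noncomputable def decF {n : ℕ} (k : ℕ) (a : Finset (Fin n) → ℝ)
    (X : Fin k → Fin n → ℝ) : ℝ :=
  ∑ S : Finset (Fin n),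
    ((Nat.factorial (k - S.card) : ℝ) / (Nat.factorial k : ℝ)) * a S *
      ∑ b ∈ Finset.univ.filter (fun b : {i // i ∈ S} → Fin k => Function.Injective b),
        ∏ i : {i // i ∈ S}, X (b i) (i : Fin n)


lemma abs_pm (b : Bool) : |pm b| = 1 := by cases b <;> simp [pm]

lemma convex_abs_bound (A B t M : ℝ) (ht : |t| ≤ 1) (h1 : |A + B| ≤ M) (h2 : |A - B| ≤ M) :
    |A + t * B| ≤ M := by
  obtain ⟨hl, hr⟩ := abs_le.mp ht
  have key : A + t * B = ((1 + t)/2) * (A + B) + ((1 - t)/2) * (A - B) := by ring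
  rw [key]
  have e1 : |((1 + t)/2) * (A + B)| ≤ ((1 + t)/2) * M := by
    rw [abs_mul, abs_of_nonneg (show (0:ℝ) ≤ (1+t)/2 by linarith)]
    exact mul_le_mul_of_nonneg_left h1 (by linarith)
  have e2 : |((1 - t)/2) * (A - B)| ≤ ((1 - t)/2) * M := by
    rw [abs_mul, abs_of_nonneg (show (0:ℝ) ≤ (1-t)/2 by linarith)]
    exact mul_le_mul_of_nonneg_left h2 (by linarith)
  have e3 := abs_add_le (((1 + t)/2) * (A + B)) (((1 - t)/2) * (A - B))
  have : ((1 + t)/2) * M + ((1 - t)/2) * M = M := by ring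
  linarith

lemma evalPoly_split {n : ℕ} (a : Finset (Fin n) → ℝ) (y : Fin n → ℝ) (j : Fin n) :
    evalPoly a y = (∑ S ∈ univ.filter (fun S : Finset (Fin n) => j ∉ S), a S * ∏ i ∈ S, y i)
      + y j * ∑ S ∈ univ.filter (fun S : Finset (Fin n) => j ∈ S), a S * ∏ i ∈ S.erase j, y i := by
  rw [evalPoly, ← Finset.sum_filter_add_sum_filter_not univ (fun S : Finset (Fin n) => j ∉ S)]
  congr 1
  rw [Finset.mul_sum]
  apply Finset.sum_congr (by simp)
  intro S hS
  simp only [Finset.mem_filter, not_not] at hS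
  rw [← Finset.mul_prod_erase S y hS.2]
  ring

lemma evalPoly_update {n : ℕ} (a : Finset (Fin n) → ℝ) (y : Fin n → ℝ) (j : Fin n) (t : ℝ) :
    evalPoly a (Function.update y j t) =
      (∑ S ∈ univ.filter (fun S : Finset (Fin n) => j ∉ S), a S * ∏ i ∈ S, y i)
      + t * ∑ S ∈ univ.filter (fun S : Finset (Fin n) => j ∈ S), a S * ∏ i ∈ S.erase j, y i := by
  rw [evalPoly_split a _ j]
  congr 1
  · apply Finset.sum_congr rfl
    intro S hS
    simp only [Finset.mem_filter, Finset.mem_univ, true_and] at hS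
    congr 1
    apply Finset.prod_congr rfl
    intro i hi
    have hij : i ≠ j := fun h => hS (by rwa [h] at hi)
    exact Function.update_of_ne hij t y
  · rw [Function.update_self]
    congr 1
    apply Finset.sum_congr rfl
    intro S _
    congr 1
    apply Finset.prod_congr rfl
    intro i hi
    exact Function.update_of_ne (Finset.ne_of_mem_erase hi) t y

lemma maxPrinciple_aux {n : ℕ} (a : Finset (Fin n) → ℝ) (M : ℝ)
    (hM : ∀ x : Fin n → Bool, |evalPoly a (fun i => pm (x i))| ≤ M) :
    ∀ (m : ℕ) (y : Fin n → ℝ), (∀ i, |y i| ≤ 1) →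
      (univ.filter (fun i => y i ≠ 1 ∧ y i ≠ -1)).card ≤ m → |evalPoly a y| ≤ M := by
  intro m
  induction m with
  | zero =>
    intro y hy hcard
    have hempty : (univ.filter (fun i => y i ≠ 1 ∧ y i ≠ -1)) = ∅ := by
      rwa [Nat.le_zero, Finset.card_eq_zero] at hcard
    have hyi : ∀ i, y i = 1 ∨ y i = -1 := by
      intro i
      by_contra h
      push_neg at h
      have hmem : i ∈ (univ.filter (fun i => y i ≠ 1 ∧ y i ≠ -1)) := by
        simp [h.1, h.2]
      rw [hempty] at hmem
      exact absurd hmem (Finset.notMem_empty i)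
    classical
    have hx : ∃ x : Fin n → Bool, ∀ i, pm (x i) = y i := by
      refine ⟨fun i => if y i = 1 then true else false, fun i => ?_⟩
      rcases hyi i with h | h
      · simp [pm, h]
      · have h1 : y i ≠ 1 := by rw [h]; norm_num
        show pm (if y i = 1 then true else false) = y i
        rw [if_neg h1, h]
        simp [pm]
    obtain ⟨x, hx⟩ := hx
    have heq : (fun i => pm (x i)) = y := funext hx
    have := hM x
    rwa [heq] at this
  | succ m ih =>
    intro y hy hcard
    by_cases hc : (univ.filter (fun i => y i ≠ 1 ∧ y i ≠ -1)).card ≤ m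
    · exact ih y hy hc
    · have hpos : 0 < (univ.filter (fun i => y i ≠ 1 ∧ y i ≠ -1)).card := by omega
      obtain ⟨j, hj⟩ := Finset.card_pos.mp hpos
      have hj' := hj
      simp only [Finset.mem_filter, Finset.mem_univ, true_and] at hj'
      have hupdate : ∀ t : ℝ, (t = 1 ∨ t = -1) → |evalPoly a (Function.update y j t)| ≤ M := by
        intro t ht
        have h1 : ∀ i, |Function.update y j t i| ≤ 1 := by
          intro i
          by_cases hij : i = j
          · subst hij; rw [Function.update_self]; rcases ht with h | h <;> simp [h]
          · rw [Function.update_of_ne hij]; exact hy i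
        have h2 : (univ.filter (fun i => Function.update y j t i ≠ 1 ∧ Function.update y j t i ≠ -1)).card ≤ m := by
          have hsub : (univ.filter (fun i => Function.update y j t i ≠ 1 ∧ Function.update y j t i ≠ -1))
              ⊆ (univ.filter (fun i => y i ≠ 1 ∧ y i ≠ -1)).erase j := by
            intro i hi
            simp only [Finset.mem_filter, Finset.mem_univ, true_and] at hi
            have hij : i ≠ j := by
              intro h
              subst h
              rw [Function.update_self] at hi
              rcases ht with h | h
              · exact hi.1 h
              · exact hi.2 h
            rw [Function.update_of_ne hij] at hi
            rw [Finset.mem_erase]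
            refine ⟨hij, ?_⟩
            simp only [Finset.mem_filter, Finset.mem_univ, true_and]
            exact hi
          have hle := Finset.card_le_card hsub
          have hce := Finset.card_erase_of_mem hj
          omega
        exact ih (Function.update y j t) h1 h2
      have hAB : |(∑ S ∈ univ.filter (fun S : Finset (Fin n) => j ∉ S), a S * ∏ i ∈ S, y i)
          + 1 * ∑ S ∈ univ.filter (fun S : Finset (Fin n) => j ∈ S), a S * ∏ i ∈ S.erase j, y i| ≤ M := by
        have := hupdate 1 (Or.inl rfl)
        rwa [evalPoly_update] at this
      have hAB' : |(∑ S ∈ univ.filter (fun S : Finset (Fin n) => j ∉ S), a S * ∏ i ∈ S, y i)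
          + (-1) * ∑ S ∈ univ.filter (fun S : Finset (Fin n) => j ∈ S), a S * ∏ i ∈ S.erase j, y i| ≤ M := by
        have := hupdate (-1) (Or.inr rfl)
        rwa [evalPoly_update] at this
      rw [evalPoly_split a y j]
      rw [one_mul] at hAB
      rw [neg_one_mul, ← sub_eq_add_neg] at hAB'
      exact convex_abs_bound _ _ _ _ (hy j) hAB hAB'

lemma maxPrinciple {n : ℕ} (a : Finset (Fin n) → ℝ) (M : ℝ)
    (hM : ∀ x : Fin n → Bool, |evalPoly a (fun i => pm (x i))| ≤ M) :
    ∀ y : Fin n → ℝ, (∀ i, |y i| ≤ 1) → |evalPoly a y| ≤ M := by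
  intro y hy
  exact maxPrinciple_aux a M hM (univ.filter (fun i => y i ≠ 1 ∧ y i ≠ -1)).card y hy le_rfl

section Poly
open Polynomial

lemma coeff_abs_le (Q : Polynomial ℂ) (N : ℕ) (hN : Q.natDegree < N) (M : ℝ)
    (h : ∀ z : ℂ, ‖z‖ = 1 → ‖Q.eval z‖ ≤ M) (j : ℕ) :
    ‖Q.coeff j‖ ≤ M := by
  have hM0 : 0 ≤ M := le_trans (by positivity) (h 1 (by simp))
  by_cases hj : N ≤ j
  · rw [Polynomial.coeff_eq_zero_of_natDegree_lt (lt_of_lt_of_le hN hj)]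
    simpa using hM0
  push_neg at hj
  have hN0 : (N : ℕ) ≠ 0 := by omega
  set ω : ℂ := Complex.exp (2 * Real.pi * Complex.I / N) with hω
  have hprim : IsPrimitiveRoot ω N := Complex.isPrimitiveRoot_exp N hN0
  have habsω : ‖ω‖ = 1 := by
    rw [hω]
    have : (2 * (Real.pi : ℂ) * Complex.I / N) = ((2 * Real.pi / N : ℝ) : ℂ) * Complex.I := by
      push_cast; ring
    rw [this, Complex.norm_exp_ofReal_mul_I]
  have habsωp : ∀ t : ℕ, ‖ω ^ t‖ = 1 := by
    intro t; rw [norm_pow, habsω, one_pow]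
  -- inner sum evaluation
  have hgeom : ∀ r : ℕ, (∑ t ∈ range N, (ω ^ r) ^ t) = if N ∣ r then (N : ℂ) else 0 := by
    intro r
    by_cases hd : N ∣ r
    · rw [if_pos hd]
      have : ω ^ r = 1 := (hprim.pow_eq_one_iff_dvd r).mpr hd
      simp [this]
    · rw [if_neg hd]
      have hne : ω ^ r ≠ 1 := fun hc => hd ((hprim.pow_eq_one_iff_dvd r).mp hc)
      rw [geom_sum_eq hne]
      have : (ω ^ r) ^ N = 1 := by
        rw [← pow_mul, mul_comm, pow_mul, hprim.pow_eq_one, one_pow]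
      rw [this]
      simp
  have key : (∑ t ∈ range N, Q.eval (ω ^ t) * ω ^ ((N - j) * t)) = (N : ℂ) * Q.coeff j := by
    have hexp : ∀ t, Q.eval (ω ^ t) = ∑ l ∈ range N, Q.coeff l * (ω ^ t) ^ l :=
      fun t => Polynomial.eval_eq_sum_range' hN _
    calc (∑ t ∈ range N, Q.eval (ω ^ t) * ω ^ ((N - j) * t))
        = ∑ t ∈ range N, ∑ l ∈ range N, Q.coeff l * (ω ^ ((l + (N - j)) * t)) := by
          apply Finset.sum_congr rfl
          intro t _
          rw [hexp t, Finset.sum_mul]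
          apply Finset.sum_congr rfl
          intro l _
          rw [mul_assoc]
          congr 1
          rw [← pow_mul, ← pow_add]
          congr 1
          ring
      _ = ∑ l ∈ range N, Q.coeff l * ∑ t ∈ range N, (ω ^ (l + (N - j))) ^ t := by
          rw [Finset.sum_comm]
          apply Finset.sum_congr rfl
          intro l _
          rw [Finset.mul_sum]
          apply Finset.sum_congr rfl
          intro t _
          rw [← pow_mul]
      _ = ∑ l ∈ range N, Q.coeff l * (if N ∣ (l + (N - j)) then (N:ℂ) else 0) := by
          apply Finset.sum_congr rfl
          intro l _
          rw [hgeom]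
      _ = ∑ l ∈ range N, (if l = j then Q.coeff l * (N:ℂ) else 0) := by
          apply Finset.sum_congr rfl
          intro l hl
          have hlN := Finset.mem_range.mp hl
          by_cases he : l = j
          · subst he
            rw [if_pos rfl, if_pos (show N ∣ (l + (N - l)) from by
              rw [(by omega : l + (N - l) = N)]), mul_comm]
          · rw [if_neg he, if_neg ?_, mul_zero]
            intro hdvd
            rcases hdvd with ⟨c, hc⟩
            rcases c with _ | c
            · omega
            · rcases c with _ | c
              · omega
              · have hc2 : N * (c + 1 + 1) = N * c + N + N := by ring
                rw [hc2] at hc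
                have : 0 ≤ N * c := Nat.zero_le _
                omega
      _ = (N : ℂ) * Q.coeff j := by
          rw [Finset.sum_ite_eq' (range N) j (fun l => Q.coeff l * (N:ℂ)),
            if_pos (Finset.mem_range.mpr hj)]
          ring
  have hbound : ‖(N : ℂ) * Q.coeff j‖ ≤ N * M := by
    rw [← key]
    calc ‖∑ t ∈ range N, Q.eval (ω ^ t) * ω ^ ((N - j) * t)‖
        ≤ ∑ t ∈ range N, ‖Q.eval (ω ^ t) * ω ^ ((N - j) * t)‖ :=
          norm_sum_le _ _
      _ ≤ ∑ t ∈ range N, M := by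
          apply Finset.sum_le_sum
          intro t _
          rw [norm_mul, habsωp]
          rw [mul_one]
          exact h _ (habsωp t)
      _ = N * M := by rw [Finset.sum_const, Finset.card_range, nsmul_eq_mul]
  rw [norm_mul, Complex.norm_natCast] at hbound
  have hNpos : (0:ℝ) < N := by positivity
  exact le_of_mul_le_mul_left hbound hNpos

lemma sum_pow_le_aux (k : ℕ) (w : ℝ) (hw : 1 ≤ w) :
    ∑ j ∈ Finset.range (2 * k + 1), w ^ j ≤ 2 * (1 + w ^ 2) ^ k := by
  induction k with
  | zero => simp
  | succ k ih =>
    have hstep : ∑ j ∈ Finset.range (2 * (k+1) + 1), w ^ j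
        = (∑ j ∈ Finset.range (2 * k + 1), w ^ j) + w ^ (2*k+1) + w ^ (2*k+2) := by
      have h1 : 2 * (k+1) + 1 = (2*k+1) + 1 + 1 := by ring
      rw [h1, Finset.sum_range_succ, Finset.sum_range_succ]
    rw [hstep]
    have hw0 : (0:ℝ) ≤ w := by linarith
    have h2 : w ^ (2*k+1) ≤ w ^ (2*k+2) := pow_le_pow_right₀ hw (by omega)
    have h3 : (1 + w^2)^(k+1) = (1 + w^2)^k + w^2 * (1 + w^2)^k := by ring
    have h4 : w ^ (2*k+2) ≤ w^2 * (1 + w^2)^k := by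
      have : w ^ (2*k+2) = w^2 * (w^2)^k := by rw [← pow_mul]; ring
      rw [this]
      apply mul_le_mul_of_nonneg_left _ (by positivity)
      apply pow_le_pow_left₀ (by positivity)
      nlinarith
    nlinarith [pow_nonneg (by positivity : (0:ℝ) ≤ 1 + w^2) k]

lemma extrapolate (k : ℕ) (q : ℕ → ℝ) (M : ℝ)
    (hq : ∀ t : ℝ, |t| ≤ 1 → |∑ m ∈ Finset.range (k+1), q m * t ^ m| ≤ M)
    (u : ℝ) (hu : 1 ≤ u) :
    |∑ m ∈ Finset.range (k+1), q m * u ^ m| ≤ 2 * (2*u) ^ k * M := by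
  have hM0 : 0 ≤ M := le_trans (by positivity) (hq 0 (by norm_num))
  set s := Real.sqrt (u^2 - 1) with hsdef
  have hs0 : 0 ≤ s := Real.sqrt_nonneg _
  have hs : s^2 = u^2 - 1 := Real.sq_sqrt (by nlinarith)
  set w := u + s with hwdef
  have hw1 : 1 ≤ w := by simp only [hwdef]; linarith
  have hw0 : (0:ℝ) < w := by linarith
  have hkey : w^2 + 1 = 2*u*w := by
    simp only [hwdef]; nlinarith
  set P : Polynomial ℂ :=
    ∑ m ∈ Finset.range (k+1), Polynomial.C ((q m : ℝ) : ℂ) * Polynomial.X ^ (k - m)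
      * (Polynomial.C (2⁻¹ : ℂ) * (Polynomial.X ^ 2 + 1)) ^ m with hP
  have hdegP : P.natDegree < 2*k + 1 := by
    rw [hP]
    have : ∀ m ∈ Finset.range (k+1), (Polynomial.C ((q m : ℝ) : ℂ) * Polynomial.X ^ (k - m)
        * (Polynomial.C (2⁻¹ : ℂ) * (Polynomial.X ^ 2 + 1)) ^ m).natDegree ≤ 2*k := by
      intro m hm
      have hm' : m ≤ k := by
        have := Finset.mem_range.mp hm; omega
      apply le_trans (Polynomial.natDegree_mul_le)
      have h1 : (Polynomial.C ((q m : ℝ) : ℂ) * Polynomial.X ^ (k - m)).natDegree ≤ k - m := by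
        apply le_trans (Polynomial.natDegree_mul_le)
        simp [Polynomial.natDegree_C, Polynomial.natDegree_X_pow]
      have h2 : ((Polynomial.C (2⁻¹ : ℂ) * (Polynomial.X ^ 2 + 1)) ^ m).natDegree ≤ 2*m := by
        have hb : (Polynomial.C (2⁻¹ : ℂ) * (Polynomial.X ^ 2 + 1)).natDegree ≤ 2 := by
          apply le_trans (Polynomial.natDegree_mul_le)
          have hb2 : (Polynomial.X ^ 2 + (1:Polynomial ℂ)).natDegree ≤ 2 := by
            apply le_trans (Polynomial.natDegree_add_le _ _)
            simp [Polynomial.natDegree_X_pow]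
          simp only [Polynomial.natDegree_C, zero_add]
          exact hb2
        have hp := Polynomial.natDegree_pow_le
          (p := Polynomial.C (2⁻¹ : ℂ) * (Polynomial.X ^ 2 + 1)) (n := m)
        have h3 : m * (Polynomial.C (2⁻¹:ℂ) * (Polynomial.X ^ 2 + 1)).natDegree ≤ m * 2 :=
          Nat.mul_le_mul_left m hb
        omega
      omega
    have := Polynomial.natDegree_sum_le_of_forall_le (Finset.range (k+1)) _ this
    omega
  -- evaluation on the unit circle
  have hcircle : ∀ z : ℂ, ‖z‖ = 1 → ‖P.eval z‖ ≤ M := by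
    intro z hz
    have hz0 : z ≠ 0 := by
      intro h; rw [h] at hz; simp at hz
    have hconj : z * (starRingEnd ℂ) z = 1 := by
      rw [Complex.mul_conj]
      norm_cast
      rw [← Complex.sq_norm, hz]
      norm_num
    have hz2 : (2⁻¹:ℂ) * (z^2 + 1) = z * (z.re : ℂ) := by
      have h1 : z^2 + 1 = z * (z + (starRingEnd ℂ) z) := by
        rw [mul_add, ← sq, hconj]
      rw [h1, Complex.add_conj]
      push_cast
      ring
    have heval : P.eval z = z^k * ((∑ m ∈ Finset.range (k+1), q m * (z.re) ^ m : ℝ) : ℂ) := by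
      rw [hP]
      rw [Polynomial.eval_finset_sum]
      push_cast
      rw [Finset.mul_sum]
      apply Finset.sum_congr rfl
      intro m hm
      have hm' : m ≤ k := by have := Finset.mem_range.mp hm; omega
      simp only [Polynomial.eval_mul, Polynomial.eval_pow, Polynomial.eval_C,
        Polynomial.eval_add, Polynomial.eval_one, Polynomial.eval_X]
      have hpowz : z ^ (k - m) * z ^ m = z ^ k := by
        rw [← pow_add, Nat.sub_add_cancel hm']
      rw [show ((2:ℂ))⁻¹ * (z^2 + 1) = z * (z.re:ℂ) from hz2, mul_pow]
      linear_combination ((q m : ℂ) * ((z.re : ℂ)) ^ m) * hpowz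
    rw [heval, norm_mul, norm_pow, hz, one_pow, one_mul, Complex.norm_real, Real.norm_eq_abs]
    apply hq
    rw [← hz]
    exact Complex.abs_re_le_norm z
  have hcoeff : ∀ j, ‖P.coeff j‖ ≤ M := coeff_abs_le P (2*k+1) hdegP M hcircle
  -- evaluate at w
  have hevalw : P.eval (w : ℂ) = ((w^k * ∑ m ∈ Finset.range (k+1), q m * u ^ m : ℝ) : ℂ) := by
    rw [hP, Polynomial.eval_finset_sum]
    push_cast
    rw [Finset.mul_sum]
    apply Finset.sum_congr rfl
    intro m hm
    have hm' : m ≤ k := by have := Finset.mem_range.mp hm; omega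
    simp only [Polynomial.eval_mul, Polynomial.eval_pow, Polynomial.eval_C,
      Polynomial.eval_add, Polynomial.eval_one, Polynomial.eval_X]
    have hw2 : (2⁻¹:ℂ) * ((w:ℂ)^2 + 1) = (u:ℂ) * (w:ℂ) := by
      have : ((w^2 + 1 : ℝ) : ℂ) = ((2*u*w : ℝ) : ℂ) := by rw [hkey]
      push_cast at this
      rw [this]; ring
    have hpoww : (w:ℂ) ^ (k - m) * (w:ℂ) ^ m = (w:ℂ) ^ k := by
      rw [← pow_add, Nat.sub_add_cancel hm']
    rw [hw2, mul_pow]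
    linear_combination ((q m : ℂ) * ((u:ℂ)) ^ m) * hpoww
  have habsw : ‖P.eval (w:ℂ)‖ = w^k * |∑ m ∈ Finset.range (k+1), q m * u ^ m| := by
    rw [hevalw, Complex.norm_real, Real.norm_eq_abs, abs_mul, abs_of_nonneg (by positivity : (0:ℝ) ≤ w^k)]
  have hPsum : ‖P.eval (w:ℂ)‖ ≤ M * (2 * (1 + w^2)^k) := by
    rw [Polynomial.eval_eq_sum_range' hdegP]
    calc ‖∑ j ∈ Finset.range (2*k+1), P.coeff j * (w:ℂ) ^ j‖
        ≤ ∑ j ∈ Finset.range (2*k+1), ‖P.coeff j * (w:ℂ) ^ j‖ :=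
          norm_sum_le _ _
      _ ≤ ∑ j ∈ Finset.range (2*k+1), M * w ^ j := by
          apply Finset.sum_le_sum
          intro j _
          rw [norm_mul, norm_pow, Complex.norm_real, Real.norm_eq_abs, abs_of_nonneg (le_of_lt hw0)]
          exact mul_le_mul_of_nonneg_right (hcoeff j) (by positivity)
      _ = M * ∑ j ∈ Finset.range (2*k+1), w ^ j := by rw [Finset.mul_sum]
      _ ≤ M * (2 * (1 + w^2)^k) := by
          apply mul_le_mul_of_nonneg_left (sum_pow_le_aux k w hw1) hM0
  have hfinal : w^k * |∑ m ∈ Finset.range (k+1), q m * u ^ m| ≤ M * (2 * (2*u)^k * w^k) := by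
    rw [← habsw]
    have h1 : (1 + w^2)^k = (2*u)^k * w^k := by
      rw [← mul_pow]
      congr 1
      linarith [hkey]
    calc ‖P.eval (w:ℂ)‖ ≤ M * (2 * (1 + w^2)^k) := hPsum
      _ = M * (2 * (2*u)^k * w^k) := by rw [h1]; ring
  have hwk : (0:ℝ) < w^k := by positivity
  rw [show M * (2 * (2*u)^k * w^k) = w^k * (2 * (2*u)^k * M) from by ring] at hfinal
  exact (mul_le_mul_iff_right₀ hwk).mp hfinal

end Poly

lemma revBound_pos (k : ℕ) (q : ℕ → ℝ) (M : ℝ)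
    (hq : ∀ t : ℝ, |t| ≤ 1 → |∑ m ∈ Finset.range (k+1), q m * t ^ m| ≤ M)
    (θ : ℝ) (hθ : 0 < θ) (hθ1 : θ ≤ 1) :
    |∑ m ∈ Finset.range (k+1), q m * θ ^ (k - m)| ≤ 2^(k+1) * M := by
  have hθ0 : θ ≠ 0 := ne_of_gt hθ
  set u := 1/θ with hu
  have hu1 : 1 ≤ u := by rw [hu]; exact one_le_one_div hθ hθ1
  have hext := extrapolate k q M hq u hu1
  have hid : ∑ m ∈ Finset.range (k+1), q m * θ ^ (k - m)
      = θ^k * ∑ m ∈ Finset.range (k+1), q m * u ^ m := by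
    rw [Finset.mul_sum]
    apply Finset.sum_congr rfl
    intro m hm
    have hm' : m ≤ k := by have := Finset.mem_range.mp hm; omega
    have h1 : θ ^ (k - m) = θ^k * (θ^m)⁻¹ := pow_sub₀ θ hθ0 hm'
    have h2 : u ^ m = (θ^m)⁻¹ := by rw [hu, one_div, inv_pow]
    rw [h1, h2]
    ring
  have hpow : θ^k * (2*u)^k = 2^k := by
    rw [← mul_pow]
    have : θ * (2 * u) = 2 := by rw [hu]; field_simp
    rw [this]
  rw [hid, abs_mul, abs_of_nonneg (by positivity : (0:ℝ) ≤ θ^k)]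
  calc θ^k * |∑ m ∈ Finset.range (k+1), q m * u ^ m|
      ≤ θ^k * (2 * (2*u)^k * M) := by
        apply mul_le_mul_of_nonneg_left hext (by positivity)
    _ = 2 * (θ^k * (2*u)^k) * M := by ring
    _ = 2^(k+1) * M := by rw [hpow]; ring

lemma revBound (k : ℕ) (q : ℕ → ℝ) (M : ℝ)
    (hq : ∀ t : ℝ, |t| ≤ 1 → |∑ m ∈ Finset.range (k+1), q m * t ^ m| ≤ M)
    (θ : ℝ) (hθ : |θ| ≤ 1) :
    |∑ m ∈ Finset.range (k+1), q m * θ ^ (k - m)| ≤ 2^(k+1) * M := by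
  obtain ⟨hθl, hθr⟩ := abs_le.mp hθ
  rcases lt_trichotomy θ 0 with hneg | hzero | hpos
  · -- negative case
    set q' : ℕ → ℝ := fun m => (-1)^m * q m with hq'def
    have hq' : ∀ t : ℝ, |t| ≤ 1 → |∑ m ∈ Finset.range (k+1), q' m * t ^ m| ≤ M := by
      intro t ht
      have hid : ∑ m ∈ Finset.range (k+1), q' m * t ^ m
          = ∑ m ∈ Finset.range (k+1), q m * (-t) ^ m := by
        apply Finset.sum_congr rfl
        intro m _
        rw [hq'def, neg_pow]
        ring
      rw [hid]
      exact hq (-t) (by rwa [abs_neg])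
    have hres := revBound_pos k q' M hq' (-θ) (by linarith) (by linarith)
    have hid2 : ∑ m ∈ Finset.range (k+1), q m * θ ^ (k - m)
        = (-1)^k * ∑ m ∈ Finset.range (k+1), q' m * (-θ) ^ (k - m) := by
      rw [Finset.mul_sum]
      apply Finset.sum_congr rfl
      intro m hm
      have hm' : m ≤ k := by have := Finset.mem_range.mp hm; omega
      have e1 : ((-1:ℝ))^m * (-1:ℝ)^(k-m) = (-1:ℝ)^k := by
        rw [← pow_add, Nat.add_sub_cancel' hm']
      have e2 : (-θ) ^ (k-m) = (-1:ℝ)^(k-m) * θ^(k-m) := by rw [neg_pow]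
      have e4 : ((-1:ℝ))^k * (-1:ℝ)^k = 1 := by
        rw [← pow_add, ← two_mul, pow_mul]
        norm_num
      rw [hq'def, e2]
      linear_combination (-(q m * θ^(k-m)) * ((-1:ℝ))^k) * e1 + (-(q m * θ^(k-m))) * e4
    rw [hid2, abs_mul, abs_pow, abs_neg, abs_one, one_pow, one_mul]
    exact hres
  · -- zero case
    subst hzero
    set g : ℝ → ℝ := fun t => ∑ m ∈ Finset.range (k+1), q m * t ^ (k - m) with hgdef
    have hgc : Continuous g := by
      apply continuous_finset_sum
      intro m _
      exact continuous_const.mul (continuous_pow _)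
    have hseq : Filter.Tendsto (fun j : ℕ => (1:ℝ)/(j+1)) Filter.atTop (nhds 0) :=
      tendsto_one_div_add_atTop_nhds_zero_nat
    have h1 : Filter.Tendsto (fun j : ℕ => |g (1/(j+1))|) Filter.atTop (nhds |g 0|) :=
      ((hgc.tendsto 0).comp hseq).abs
    have h2 : ∀ j : ℕ, |g (1/((j:ℝ)+1))| ≤ 2^(k+1)*M := by
      intro j
      apply revBound_pos k q M hq
      · positivity
      · rw [div_le_one (by positivity)]
        have : (0:ℝ) ≤ (j:ℝ) := Nat.cast_nonneg j
        linarith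
    exact le_of_tendsto' h1 h2
  · exact revBound_pos k q M hq θ hpos hθr

lemma card_extend {α β γ : Type*} [Fintype α] [Fintype β] [Fintype γ] [DecidableEq α]
    [DecidableEq β] [DecidableEq γ]
    (b : α → γ) (hb : Function.Injective b)
    (hcard : Fintype.card α + Fintype.card β = Fintype.card γ) :
    (univ.filter (fun d : β → γ => Function.Bijective (Sum.elim b d))).card
      = (Fintype.card β).factorial := by
  classical
  rw [← Fintype.card_subtype]
  have hcompl : Fintype.card {y : γ // y ∉ Set.range b} = Fintype.card β := by
    have h1 : Fintype.card {y : γ // y ∈ Set.range b} = Fintype.card α :=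
      Set.card_range_of_injective hb
    have h2 : Fintype.card {y : γ // y ∉ Set.range b}
        = Fintype.card γ - Fintype.card {y : γ // y ∈ Set.range b} := by
      rw [Fintype.card_subtype_compl]
    omega
  have hsum : Fintype.card (α ⊕ β) = Fintype.card γ := by
    rw [Fintype.card_sum]; exact hcard
  have e : {d : β → γ // Function.Bijective (Sum.elim b d)}
      ≃ (β ≃ {y : γ // y ∉ Set.range b}) := by
    refine
      { toFun := fun d => Equiv.ofBijective
          (fun x => (⟨d.1 x, ?_⟩ : {y : γ // y ∉ Set.range b})) ⟨?_, ?_⟩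
        invFun := fun e => ⟨fun x => (e x).1, ?_⟩
        left_inv := ?_
        right_inv := ?_ }
    · -- d.1 x ∉ range b
      rintro ⟨a, ha⟩
      have : Sum.elim b d.1 (Sum.inl a) = Sum.elim b d.1 (Sum.inr x) := by
        simpa using ha
      exact Sum.inl_ne_inr (d.2.1 this)
    · -- injective
      intro x y hxy
      have hval : d.1 x = d.1 y := congrArg Subtype.val hxy
      have : Sum.elim b d.1 (Sum.inr x) = Sum.elim b d.1 (Sum.inr y) := by simpa using hval
      have := d.2.1 this
      simpa using this
    · -- surjective
      rintro ⟨y, hy⟩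
      obtain ⟨u, hu⟩ := d.2.2 y
      cases u with
      | inl a => exact absurd ⟨a, by simpa using hu⟩ hy
      | inr x => exact ⟨x, Subtype.ext (by simpa using hu)⟩
    · -- invFun gives bijective
      rw [Fintype.bijective_iff_injective_and_card]
      refine ⟨?_, hsum⟩
      intro u v huv
      cases u with
      | inl au =>
        cases v with
        | inl av => simp only [Sum.elim_inl] at huv; rw [hb huv]
        | inr xv =>
          simp only [Sum.elim_inl, Sum.elim_inr] at huv
          exact absurd ⟨au, huv⟩ (e xv).2
      | inr xu =>
        cases v with
        | inl av =>
          simp only [Sum.elim_inl, Sum.elim_inr] at huv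
          exact absurd ⟨av, huv.symm⟩ (e xu).2
        | inr xv =>
          simp only [Sum.elim_inr] at huv
          have : e xu = e xv := Subtype.ext huv
          rw [e.injective this]
    · -- left_inv
      rintro ⟨d, hd⟩
      rfl
    · -- right_inv
      intro e
      ext x
      rfl
  rw [Fintype.card_congr e]
  rw [Fintype.card_equiv (Fintype.equivOfCardEq hcompl).symm]

lemma sum_pm_bool (e : ℕ) : (∑ v : Bool, pm v ^ e) = if Even e then (2:ℝ) else 0 := by
  rw [Fintype.sum_bool]
  rcases Nat.even_or_odd e with he | he
  · rw [if_pos he]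
    simp [pm, he.neg_one_pow]
    norm_num
  · rw [if_neg (Nat.not_even_iff_odd.mpr he)]
    simp [pm, he.neg_one_pow]

lemma starS_raw {n k : ℕ} (Y : Fin k → Fin n → ℝ) (S : Finset (Fin n)) (hm : S.card ≤ k) :
    ∑ ε : Fin k → Bool, (∏ j, pm (ε j)) *
        ((∑ j, pm (ε j)) ^ (k - S.card) * ∏ i ∈ S, (∑ j, pm (ε j) * Y j i))
      = 2^k * (Nat.factorial (k - S.card) : ℝ) *
        ∑ b ∈ Finset.univ.filter (fun b : {i // i ∈ S} → Fin k => Function.Injective b),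
          ∏ i : {i // i ∈ S}, Y (b i) (i : Fin n) := by
  have hprod : ∀ ε : Fin k → Bool, (∏ i ∈ S, (∑ j, pm (ε j) * Y j i))
      = ∑ b : {i // i ∈ S} → Fin k, ∏ i : {i // i ∈ S}, (pm (ε (b i)) * Y (b i) (i : Fin n)) := by
    intro ε
    rw [← Finset.prod_coe_sort S (fun i => ∑ j, pm (ε j) * Y j i)]
    rw [Finset.prod_univ_sum (fun _ => (univ : Finset (Fin k)))
      (fun (i : {x // x ∈ S}) (j : Fin k) => pm (ε j) * Y j (i : Fin n))]
    rw [Fintype.piFinset_univ]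
  have hpow : ∀ ε : Fin k → Bool, (∑ j, pm (ε j)) ^ (k - S.card)
      = ∑ d : Fin (k - S.card) → Fin k, ∏ t, pm (ε (d t)) := by
    intro ε
    have h1 : (∑ j, pm (ε j)) ^ (k - S.card) = ∏ _t : Fin (k - S.card), (∑ j, pm (ε j)) := by
      rw [Finset.prod_const, Finset.card_univ, Fintype.card_fin]
    rw [h1, Finset.prod_univ_sum (fun _ => (univ : Finset (Fin k))) (fun _t j => pm (ε j)),
      Fintype.piFinset_univ]
  -- expand pointwise into a double sum
  have hpoint : ∀ ε : Fin k → Bool,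
      (∏ j, pm (ε j)) * ((∑ j, pm (ε j)) ^ (k - S.card) * ∏ i ∈ S, (∑ j, pm (ε j) * Y j i))
      = ∑ b : {i // i ∈ S} → Fin k, ∑ d : Fin (k - S.card) → Fin k,
          ((∏ j, pm (ε j)) * ((∏ t, pm (ε (d t))) * (∏ i : {i // i ∈ S}, pm (ε (b i)))))
            * ∏ i : {i // i ∈ S}, Y (b i) (i : Fin n) := by
    intro ε
    rw [hpow ε, hprod ε, Finset.sum_mul_sum, Finset.mul_sum, Finset.sum_comm]
    apply Finset.sum_congr rfl
    intro b _
    rw [Finset.mul_sum]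
    apply Finset.sum_congr rfl
    intro d _
    rw [Finset.prod_mul_distrib]
    ring
  rw [Finset.sum_congr rfl (fun ε _ => hpoint ε)]
  rw [Finset.sum_comm]
  -- now : ∑ b, ∑ ε, ∑ d ...
  have hswap2 : ∀ b : {i // i ∈ S} → Fin k,
      (∑ ε : Fin k → Bool, ∑ d : Fin (k - S.card) → Fin k,
        ((∏ j, pm (ε j)) * ((∏ t, pm (ε (d t))) * (∏ i : {i // i ∈ S}, pm (ε (b i)))))
          * ∏ i : {i // i ∈ S}, Y (b i) (i : Fin n))
      = (∑ d : Fin (k - S.card) → Fin k, ∑ ε : Fin k → Bool,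
        ((∏ j, pm (ε j)) * ((∏ t, pm (ε (d t))) * (∏ i : {i // i ∈ S}, pm (ε (b i))))))
          * ∏ i : {i // i ∈ S}, Y (b i) (i : Fin n) := by
    intro b
    rw [Finset.sum_comm, Finset.sum_mul]
    apply Finset.sum_congr rfl
    intro d _
    rw [Finset.sum_mul]
  rw [Finset.sum_congr rfl (fun b _ => hswap2 b)]
  -- the inner ε-sum
  have hG : ∀ (b : {i // i ∈ S} → Fin k) (d : Fin (k - S.card) → Fin k),
      (∑ ε : Fin k → Bool,
        ((∏ j, pm (ε j)) * ((∏ t, pm (ε (d t))) * (∏ i : {i // i ∈ S}, pm (ε (b i))))))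
      = if Function.Bijective (Sum.elim b d) then (2:ℝ)^k else 0 := by
    intro b d
    classical
    set h : {i // i ∈ S} ⊕ Fin (k - S.card) → Fin k := Sum.elim b d with hh
    set c : Fin k → ℕ :=
      fun j => (univ.filter (fun u : {i // i ∈ S} ⊕ Fin (k - S.card) => h u = j)).card with hc
    have hfactor : ∀ ε : Fin k → Bool,
        (∏ j, pm (ε j)) * ((∏ t, pm (ε (d t))) * (∏ i : {i // i ∈ S}, pm (ε (b i))))
        = ∏ j, pm (ε j) ^ (c j + 1) := by
      intro ε
      have h1 : (∏ t, pm (ε (d t))) * (∏ i : {i // i ∈ S}, pm (ε (b i)))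
          = ∏ u : {i // i ∈ S} ⊕ Fin (k - S.card), pm (ε (h u)) := by
        rw [Fintype.prod_sum_type]
        simp only [hh, Sum.elim_inl, Sum.elim_inr]
        ring
      have h2 : (∏ u : {i // i ∈ S} ⊕ Fin (k - S.card), pm (ε (h u)))
          = ∏ j, pm (ε j) ^ (c j) := by
        rw [← Finset.prod_fiberwise_of_maps_to (g := h) (t := univ)
          (fun u _ => mem_univ (h u)) (fun u => pm (ε (h u)))]
        apply Finset.prod_congr rfl
        intro j _
        have he : ∀ u ∈ univ.filter (fun u => h u = j), pm (ε (h u)) = pm (ε j) := by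
          intro u hu
          simp only [mem_filter] at hu
          rw [hu.2]
        rw [Finset.prod_congr rfl he, Finset.prod_const]
      rw [h1, h2, ← Finset.prod_mul_distrib]
      apply Finset.prod_congr rfl
      intro j _
      rw [pow_succ]
      ring
    rw [Finset.sum_congr rfl (fun ε _ => hfactor ε)]
    have hswap : (∑ ε : Fin k → Bool, ∏ j, pm (ε j) ^ (c j + 1))
        = ∏ j, ∑ v : Bool, pm v ^ (c j + 1) := by
      rw [Finset.prod_univ_sum (fun _ => (univ : Finset Bool)) (fun j v => pm v ^ (c j + 1)),
        Fintype.piFinset_univ]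
    rw [hswap, Finset.prod_congr rfl (fun j _ => sum_pm_bool (c j + 1))]
    by_cases hbij : Function.Bijective h
    · rw [if_pos hbij]
      have hcj : ∀ j, c j = 1 := by
        intro j
        rw [hc]
        rw [Finset.card_eq_one]
        obtain ⟨u, hu1, hu2⟩ := hbij.existsUnique j
        refine ⟨u, ?_⟩
        ext v
        simp only [mem_filter, mem_univ, true_and, mem_singleton]
        constructor
        · intro hv; exact hu2 v hv
        · intro hv; rw [hv]; exact hu1
      have hval : ∀ j : Fin k, (if Even (c j + 1) then (2:ℝ) else 0) = 2 := by
        intro j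
        rw [hcj j]
        norm_num
      rw [Finset.prod_congr rfl (fun j _ => hval j), Finset.prod_const, Finset.card_univ,
        Fintype.card_fin]
    · rw [if_neg hbij]
      by_cases hall : ∀ j, Even (c j + 1)
      · exfalso
        apply hbij
        rw [Fintype.bijective_iff_surjective_and_card]
        constructor
        · intro j
          have hodd : ¬ Even (c j) := by
            have := hall j
            rwa [Nat.even_add_one] at this
          have hpos : 0 < c j := by
            rcases Nat.eq_zero_or_pos (c j) with h0 | h0
            · exact absurd (h0 ▸ Even.zero) hodd
            · exact h0
          rw [hc] at hpos
          obtain ⟨u, hu⟩ := Finset.card_pos.mp hpos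
          simp only [mem_filter, mem_univ, true_and] at hu
          exact ⟨u, hu⟩
        · simp only [Fintype.card_sum, Fintype.card_coe, Fintype.card_fin]
          omega
      · push_neg at hall
        obtain ⟨j, hj⟩ := hall
        apply Finset.prod_eq_zero (mem_univ j)
        rw [if_neg hj]
  -- sum over d
  have hsum_d : ∀ b : {i // i ∈ S} → Fin k,
      (∑ d : Fin (k - S.card) → Fin k,
        ∑ ε : Fin k → Bool,
          ((∏ j, pm (ε j)) * ((∏ t, pm (ε (d t))) * (∏ i : {i // i ∈ S}, pm (ε (b i))))))
      = if Function.Injective b then (2:ℝ)^k * (Nat.factorial (k - S.card) : ℝ) else 0 := by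
    intro b
    rw [Finset.sum_congr rfl (fun d _ => hG b d)]
    by_cases hinj : Function.Injective b
    · rw [if_pos hinj]
      have hcount := card_extend (β := Fin (k - S.card)) b hinj
        (by rw [Fintype.card_coe, Fintype.card_fin, Fintype.card_fin]; omega)
      rw [Finset.sum_ite, Finset.sum_const, Finset.sum_const, smul_zero, add_zero, hcount,
        Fintype.card_fin, nsmul_eq_mul, mul_comm]
    · rw [if_neg hinj]
      apply Finset.sum_eq_zero
      intro d _
      rw [if_neg]
      intro hbij
      apply hinj
      intro x y hxy
      have h1 : Sum.elim b d (Sum.inl x) = Sum.elim b d (Sum.inl y) := by simpa using hxy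
      have h2 := hbij.1 h1
      simpa using h2
  rw [Finset.sum_congr rfl (fun b _ => by rw [hsum_d b])]
  -- final
  have hfinal : ∀ b : {i // i ∈ S} → Fin k,
      (if Function.Injective b then (2:ℝ)^k * ((Nat.factorial (k - S.card)) : ℝ) else 0)
        * ∏ i : {i // i ∈ S}, Y (b i) (i : Fin n)
      = if Function.Injective b then
          (2:ℝ)^k * ((Nat.factorial (k - S.card)) : ℝ) * ∏ i : {i // i ∈ S}, Y (b i) (i : Fin n)
        else 0 := by
    intro b
    split_ifs <;> simp
  rw [Finset.sum_congr rfl (fun b _ => hfinal b)]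
  rw [← Finset.sum_filter]
  rw [← Finset.mul_sum]

lemma sum_by_card {n k : ℕ} (F : Finset (Fin n) → ℝ)
    (hF : ∀ S : Finset (Fin n), k < S.card → F S = 0) (w : ℕ → ℝ) :
    ∑ S : Finset (Fin n), F S * w S.card
      = ∑ m ∈ Finset.range (k+1), (∑ S ∈ univ.filter (fun S : Finset (Fin n) => S.card = m), F S) * w m := by
  classical
  have h1 : ∑ S : Finset (Fin n), F S * w S.card
      = ∑ S ∈ univ.filter (fun S : Finset (Fin n) => S.card ≤ k), F S * w S.card := by
    symm
    apply Finset.sum_subset (Finset.filter_subset _ _)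
    intro S _ hS
    simp only [Finset.mem_filter, Finset.mem_univ, true_and, not_le] at hS
    rw [hF S hS, zero_mul]
  rw [h1]
  rw [← Finset.sum_fiberwise_of_maps_to (g := fun S : Finset (Fin n) => S.card)
    (t := Finset.range (k+1)) (fun S hS => by
      simp only [Finset.mem_filter, Finset.mem_univ, true_and] at hS
      show S.card ∈ Finset.range (k+1)
      exact Finset.mem_range.mpr (by omega)) (fun S => F S * w S.card)]
  apply Finset.sum_congr rfl
  intro m hm
  have hmk : m ≤ k := by have := Finset.mem_range.mp hm; omega
  rw [Finset.sum_mul]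
  have hset : (univ.filter (fun S : Finset (Fin n) => S.card ≤ k)).filter
      (fun S => S.card = m) = univ.filter (fun S : Finset (Fin n) => S.card = m) := by
    ext S
    simp only [Finset.mem_filter, Finset.mem_univ, true_and]
    constructor
    · rintro ⟨_, h⟩; exact h
    · intro h; exact ⟨by omega, h⟩
  rw [hset]
  apply Finset.sum_congr rfl
  intro S hS
  simp only [Finset.mem_filter, Finset.mem_univ, true_and] at hS
  rw [hS]

lemma PhiBound {n k : ℕ} (a : Finset (Fin n) → ℝ)
    (hdeg : ∀ S : Finset (Fin n), k < S.card → a S = 0) (M : ℝ)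
    (hM : ∀ x : Fin n → Bool, |evalPoly a (fun i => pm (x i))| ≤ M)
    (y : Fin n → ℝ) (hy : ∀ i, |y i| ≤ 1) (θ : ℝ) (hθ : |θ| ≤ 1) :
    |∑ S : Finset (Fin n), a S * θ ^ (k - S.card) * ∏ i ∈ S, y i| ≤ 2^(k+1) * M := by
  classical
  set q : ℕ → ℝ := fun m => ∑ S ∈ univ.filter (fun S : Finset (Fin n) => S.card = m),
    a S * ∏ i ∈ S, y i with hqdef
  have hF : ∀ S : Finset (Fin n), k < S.card → a S * ∏ i ∈ S, y i = 0 := by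
    intro S hS; rw [hdeg S hS, zero_mul]
  have hid : ∑ S : Finset (Fin n), a S * θ ^ (k - S.card) * ∏ i ∈ S, y i
      = ∑ m ∈ Finset.range (k+1), q m * θ ^ (k - m) := by
    have := sum_by_card (k := k) (fun S => a S * ∏ i ∈ S, y i) hF (fun m => θ ^ (k - m))
    rw [← this]
    apply Finset.sum_congr rfl
    intro S _
    ring
  have hq : ∀ t : ℝ, |t| ≤ 1 → |∑ m ∈ Finset.range (k+1), q m * t ^ m| ≤ M := by
    intro t ht
    have hyt : ∀ i, |t * y i| ≤ 1 := by
      intro i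
      rw [abs_mul]
      calc |t| * |y i| ≤ 1 * 1 := by
            apply mul_le_mul ht (hy i) (abs_nonneg _) (by norm_num)
        _ = 1 := by norm_num
    have heval : evalPoly a (fun i => t * y i) = ∑ m ∈ Finset.range (k+1), q m * t ^ m := by
      rw [evalPoly]
      have := sum_by_card (k := k) (fun S => a S * ∏ i ∈ S, y i) hF (fun m => t ^ m)
      rw [← this]
      apply Finset.sum_congr rfl
      intro S _
      rw [Finset.prod_mul_distrib, Finset.prod_const]
      ring
    rw [← heval]
    exact maxPrinciple a M hM _ hyt
  rw [hid]
  exact revBound k q M hq θ hθ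

lemma fact_bound : ∀ k : ℕ, 1 ≤ k → 2*(k:ℝ)^k ≤ Real.exp 1 ^ k * (Nat.factorial k : ℝ) := by
  intro k
  induction k with
  | zero => omega
  | succ k ih =>
    intro _
    rcases Nat.eq_zero_or_pos k with hk0 | hk1
    · subst hk0
      have h2 : (2:ℝ) ≤ Real.exp 1 := by
        have := Real.add_one_le_exp (1:ℝ)
        linarith
      simp [Nat.factorial]
      linarith
    · have ihk := ih hk1
      have hkpos : (0:ℝ) < k := by exact_mod_cast hk1
      have hek : (1 + 1/(k:ℝ)) ^ k ≤ Real.exp 1 := by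
        have h1 : (1:ℝ) + 1/k ≤ Real.exp (1/k) := by
          have := Real.add_one_le_exp (1/(k:ℝ))
          linarith
        have h2 : (1 + 1/(k:ℝ))^k ≤ (Real.exp (1/k))^k := by
          apply pow_le_pow_left₀ (by positivity) h1
        have h3 : (Real.exp (1/(k:ℝ)))^k = Real.exp 1 := by
          rw [← Real.exp_nat_mul]
          congr 1
          field_simp
        rwa [h3] at h2
      have hstep : ((k:ℝ)+1)^(k+1) ≤ Real.exp 1 * ((k:ℝ)+1) * (k:ℝ)^k := by
        have h1 : ((k:ℝ)+1)^k = (k:ℝ)^k * (1 + 1/(k:ℝ))^k := by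
          rw [← mul_pow]
          congr 1
          field_simp
        have h2 : ((k:ℝ)+1)^(k+1) = ((k:ℝ)+1) * ((k:ℝ)+1)^k := by ring
        rw [h2, h1]
        calc ((k:ℝ)+1) * ((k:ℝ)^k * (1 + 1/(k:ℝ))^k)
            ≤ ((k:ℝ)+1) * ((k:ℝ)^k * Real.exp 1) := by
              apply mul_le_mul_of_nonneg_left _ (by positivity)
              apply mul_le_mul_of_nonneg_left hek (by positivity)
          _ = Real.exp 1 * ((k:ℝ)+1) * (k:ℝ)^k := by ring
      have hfact : (Nat.factorial (k+1) : ℝ) = ((k:ℝ)+1) * (Nat.factorial k : ℝ) := by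
        rw [Nat.factorial_succ]
        push_cast
        ring
      have hexp0 : (0:ℝ) < Real.exp 1 := Real.exp_pos 1
      have hcast : ((k+1 : ℕ):ℝ) = (k:ℝ)+1 := by push_cast; ring
      rw [hcast]
      calc 2*((k:ℝ)+1)^(k+1) ≤ 2*(Real.exp 1 * ((k:ℝ)+1) * (k:ℝ)^k) := by
            apply mul_le_mul_of_nonneg_left _ (by norm_num)
            exact hstep
        _ = Real.exp 1 * ((k:ℝ)+1) * (2*(k:ℝ)^k) := by ring
        _ ≤ Real.exp 1 * ((k:ℝ)+1) * (Real.exp 1 ^ k * (Nat.factorial k : ℝ)) := by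
            apply mul_le_mul_of_nonneg_left ihk (by positivity)
        _ = Real.exp 1 ^ (k+1) * (((k:ℝ)+1) * (Nat.factorial k : ℝ)) := by ring
        _ = Real.exp 1 ^ (k+1) * (Nat.factorial (k+1) : ℝ) := by rw [hfact]


lemma decF_identity {n k : ℕ} (hk : 1 ≤ k) (a : Finset (Fin n) → ℝ)
    (hdeg : ∀ S : Finset (Fin n), k < S.card → a S = 0) (X : Fin k → Fin n → Bool) :
    (k:ℝ)^k * ∑ ε : Fin k → Bool, (∏ j, pm (ε j)) *
        ∑ S : Finset (Fin n), a S * ((∑ j, pm (ε j))/k) ^ (k - S.card)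
          * ∏ i ∈ S, ((∑ j, pm (ε j) * pm (X j i))/k)
      = 2^k * (Nat.factorial k : ℝ) * decF k a (fun j i => pm (X j i)) := by
  have hk0 : (k:ℝ) ≠ 0 := by
    have : (0:ℝ) < k := by exact_mod_cast hk
    linarith
  have hswap : ∑ ε : Fin k → Bool, (∏ j, pm (ε j)) *
      ∑ S : Finset (Fin n), a S * ((∑ j, pm (ε j))/k) ^ (k - S.card)
        * ∏ i ∈ S, ((∑ j, pm (ε j) * pm (X j i))/k)
      = ∑ S : Finset (Fin n), ∑ ε : Fin k → Bool, (∏ j, pm (ε j)) *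
          (a S * ((∑ j, pm (ε j))/k) ^ (k - S.card)
            * ∏ i ∈ S, ((∑ j, pm (ε j) * pm (X j i))/k)) := by
    rw [Finset.sum_congr rfl (fun ε (_ : ε ∈ univ) => Finset.mul_sum univ
      (fun S : Finset (Fin n) => a S * ((∑ j, pm (ε j))/k) ^ (k - S.card)
        * ∏ i ∈ S, ((∑ j, pm (ε j) * pm (X j i))/k)) (∏ j, pm (ε j)))]
    rw [Finset.sum_comm]
  rw [hswap, decF, Finset.mul_sum, Finset.mul_sum]
  apply Finset.sum_congr rfl
  intro S _
  by_cases hcard : S.card ≤ k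
  · -- rescale and use starS_raw
    have hper : ∀ ε : Fin k → Bool, (∏ j, pm (ε j)) *
        (a S * ((∑ j, pm (ε j))/k) ^ (k - S.card) * ∏ i ∈ S, ((∑ j, pm (ε j) * pm (X j i))/k))
        = (a S / (k:ℝ)^k) * ((∏ j, pm (ε j)) *
            ((∑ j, pm (ε j)) ^ (k - S.card) * ∏ i ∈ S, (∑ j, pm (ε j) * pm (X j i)))) := by
      intro ε
      have h1 : ((∑ j, pm (ε j))/k) ^ (k - S.card)
          = (∑ j, pm (ε j)) ^ (k - S.card) / (k:ℝ)^(k - S.card) := div_pow _ _ _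
      have h2 : ∏ i ∈ S, ((∑ j, pm (ε j) * pm (X j i))/k)
          = (∏ i ∈ S, (∑ j, pm (ε j) * pm (X j i))) / (k:ℝ)^(S.card) := by
        rw [Finset.prod_div_distrib, Finset.prod_const]
      have h3 : (k:ℝ)^(k - S.card) * (k:ℝ)^(S.card) = (k:ℝ)^k := by
        rw [← pow_add, Nat.sub_add_cancel hcard]
      rw [h1, h2]
      field_simp
      rw [← h3]
      ring
    rw [Finset.sum_congr rfl (fun ε _ => hper ε), ← Finset.mul_sum]
    rw [starS_raw (fun j i => pm (X j i)) S hcard]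
    have hkfac : (Nat.factorial k : ℝ) ≠ 0 := by
      exact_mod_cast Nat.factorial_ne_zero k
    have hkk : ((k:ℝ))^k ≠ 0 := pow_ne_zero _ hk0
    field_simp
  · -- degenerate case : a S = 0
    push_neg at hcard
    rw [hdeg S hcard]
    simp

lemma decF_zero {n : ℕ} (a : Finset (Fin n) → ℝ) (Y : Fin 0 → Fin n → ℝ)
    (hdeg : ∀ S : Finset (Fin n), 0 < S.card → a S = 0) :
    decF 0 a Y = a ∅ := by
  rw [decF]
  rw [Finset.sum_eq_single ∅]
  · have h1 : ∀ b : {i // i ∈ (∅ : Finset (Fin n))} → Fin 0, Function.Injective b := by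
      intro b x y _
      exact absurd x.2 (Finset.notMem_empty _)
    have h2 : (Finset.univ.filter
        (fun b : {i // i ∈ (∅ : Finset (Fin n))} → Fin 0 => Function.Injective b)) = univ := by
      apply Finset.filter_true_of_mem
      intro b _
      exact h1 b
    rw [h2]
    have h3 : ∀ b : {i // i ∈ (∅ : Finset (Fin n))} → Fin 0,
        (∏ i : {i // i ∈ (∅ : Finset (Fin n))}, (Y (b i) (i : Fin n))) = 1 := by
      intro b
      apply Finset.prod_of_isEmpty
    rw [Finset.sum_congr rfl (fun b _ => h3 b)]
    have h4 : Fintype.card ({i // i ∈ (∅ : Finset (Fin n))} → Fin 0) = 1 := by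
      rw [Fintype.card_fun]
      simp
    rw [Finset.sum_const, Finset.card_univ, h4]
    simp
  · intro S _ hS
    have : 0 < S.card := by
      rcases Nat.eq_zero_or_pos S.card with h | h
      · exact absurd (Finset.card_eq_zero.mp h) hS
      · exact h
    rw [hdeg S this]
    ring
  · intro h
    exact absurd (Finset.mem_univ _) h

lemma evalPoly_zero {n : ℕ} (a : Finset (Fin n) → ℝ)
    (hdeg : ∀ S : Finset (Fin n), 0 < S.card → a S = 0) (y : Fin n → ℝ) :
    evalPoly a y = a ∅ := by
  rw [evalPoly]
  rw [Finset.sum_eq_single ∅]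
  · simp
  · intro S _ hS
    have : 0 < S.card := by
      rcases Nat.eq_zero_or_pos S.card with h | h
      · exact absurd (Finset.card_eq_zero.mp h) hS
      · exact h
    rw [hdeg S this]
    ring
  · intro h
    exact absurd (Finset.mem_univ _) h

theorem stmt9 :
    ∀ (n k : ℕ) (a : Finset (Fin n) → ℝ),
      (∀ S : Finset (Fin n), k < S.card → a S = 0) →
      ∀ M : ℝ, (∀ x : Fin n → Bool, |evalPoly a (fun i => pm (x i))| ≤ M) →
        ∀ X : Fin k → Fin n → Bool,
          |decF k a (fun j i => pm (X j i))| ≤ (2 * Real.exp 1) ^ k * M := by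
  intro n k a hdeg M hM X
  have hM0 : 0 ≤ M := le_trans (abs_nonneg _) (hM (fun _ => true))
  rcases Nat.eq_zero_or_pos k with hk0 | hk
  · subst hk0
    rw [decF_zero a _ hdeg]
    have := hM (fun _ => true)
    rw [evalPoly_zero a hdeg] at this
    simpa using this
  -- main case
  have hkR : (0:ℝ) < k := by exact_mod_cast hk
  have hkfac : (0:ℝ) < (Nat.factorial k : ℝ) := by exact_mod_cast Nat.factorial_pos k
  set Sg : ℝ := ∑ ε : Fin k → Bool, (∏ j, pm (ε j)) *
      ∑ S : Finset (Fin n), a S * ((∑ j, pm (ε j))/k) ^ (k - S.card)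
        * ∏ i ∈ S, ((∑ j, pm (ε j) * pm (X j i))/k) with hSg
  have hid := decF_identity hk a hdeg X
  rw [← hSg] at hid
  -- bound on the inner Φ
  have hΦ : ∀ ε : Fin k → Bool,
      |∑ S : Finset (Fin n), a S * ((∑ j, pm (ε j))/k) ^ (k - S.card)
        * ∏ i ∈ S, ((∑ j, pm (ε j) * pm (X j i))/k)| ≤ 2^(k+1) * M := by
    intro ε
    have hθ : |(∑ j, pm (ε j))/(k:ℝ)| ≤ 1 := by
      rw [abs_div, abs_of_pos hkR, div_le_one hkR]
      calc |∑ j, pm (ε j)| ≤ ∑ j, |pm (ε j)| := Finset.abs_sum_le_sum_abs _ _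
        _ = ∑ _j : Fin k, (1:ℝ) := by
            apply Finset.sum_congr rfl
            intro j _
            cases ε j <;> simp [pm]
        _ = k := by rw [Finset.sum_const, Finset.card_univ, Fintype.card_fin, nsmul_eq_mul, mul_one]
    have hy : ∀ i : Fin n, |(∑ j, pm (ε j) * pm (X j i))/(k:ℝ)| ≤ 1 := by
      intro i
      rw [abs_div, abs_of_pos hkR, div_le_one hkR]
      calc |∑ j, pm (ε j) * pm (X j i)| ≤ ∑ j, |pm (ε j) * pm (X j i)| :=
            Finset.abs_sum_le_sum_abs _ _
        _ = ∑ _j : Fin k, (1:ℝ) := by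
            apply Finset.sum_congr rfl
            intro j _
            rw [abs_mul]
            cases ε j <;> cases X j i <;> simp [pm]
        _ = k := by rw [Finset.sum_const, Finset.card_univ, Fintype.card_fin, nsmul_eq_mul, mul_one]
    exact PhiBound a hdeg M hM _ hy _ hθ
  have hSgbound : |Sg| ≤ 2^k * (2^(k+1) * M) := by
    rw [hSg]
    calc |∑ ε : Fin k → Bool, (∏ j, pm (ε j)) *
        ∑ S : Finset (Fin n), a S * ((∑ j, pm (ε j))/k) ^ (k - S.card)
          * ∏ i ∈ S, ((∑ j, pm (ε j) * pm (X j i))/k)|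
        ≤ ∑ ε : Fin k → Bool, |(∏ j, pm (ε j)) *
            ∑ S : Finset (Fin n), a S * ((∑ j, pm (ε j))/k) ^ (k - S.card)
              * ∏ i ∈ S, ((∑ j, pm (ε j) * pm (X j i))/k)| := Finset.abs_sum_le_sum_abs _ _
      _ ≤ ∑ _ε : Fin k → Bool, 2^(k+1) * M := by
          apply Finset.sum_le_sum
          intro ε _
          rw [abs_mul]
          have he : |∏ j, pm (ε j)| = 1 := by
            rw [Finset.abs_prod]
            have : ∀ j ∈ (univ : Finset (Fin k)), |pm (ε j)| = 1 := by
              intro j _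
              cases ε j <;> simp [pm]
            rw [Finset.prod_congr rfl this, Finset.prod_const, one_pow]
          rw [he, one_mul]
          exact hΦ ε
      _ = 2^k * (2^(k+1) * M) := by
          rw [Finset.sum_const, Finset.card_univ, nsmul_eq_mul]
          congr 1
          rw [Fintype.card_fun]
          simp
  -- conclude
  have hne : (0:ℝ) < 2^k * (Nat.factorial k : ℝ) := by positivity
  have hdecF : decF k a (fun j i => pm (X j i)) = (k:ℝ)^k * Sg / (2^k * (Nat.factorial k : ℝ)) := by
    rw [eq_div_iff (ne_of_gt hne)]
    linear_combination (-1 : ℝ) * hid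
  rw [hdecF]
  have habs : |(k:ℝ)^k * Sg / (2^k * (Nat.factorial k : ℝ))|
      = (k:ℝ)^k * |Sg| / (2^k * (Nat.factorial k : ℝ)) := by
    rw [abs_div, abs_mul, abs_of_nonneg (by positivity : (0:ℝ) ≤ (k:ℝ)^k),
      abs_of_nonneg (by positivity : (0:ℝ) ≤ (2:ℝ)^k * (Nat.factorial k : ℝ))]
  rw [habs]
  have hfb := fact_bound k hk
  calc (k:ℝ)^k * |Sg| / (2^k * (Nat.factorial k : ℝ))
      ≤ (k:ℝ)^k * (2^k * (2^(k+1) * M)) / (2^k * (Nat.factorial k : ℝ)) := by gcongr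
    _ = (2*(k:ℝ)^k / (Nat.factorial k : ℝ)) * (2^k * M) := by
        field_simp
        ring
    _ ≤ (Real.exp 1 ^ k * (Nat.factorial k : ℝ) / (Nat.factorial k : ℝ)) * (2^k * M) := by
        gcongr
    _ = (2*Real.exp 1)^k * M := by
        rw [mul_pow]
        field_simp
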